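/- Let 0 < a < b and define F : [b,∞) → ℝ by F(s) = ∫_b^s (∫_a^t e^{2τ} dτ)^{-1/2} dt + 1. Then F is monotonically increasing, bounded above, and strictly concave (F'' < 0 on (b,∞)). Moreover limsup_{s→∞} F'(s)²/(F(s)|F''(s)|) < ∞ and liminf_{s→∞} F'(s)³(e^{2s}-1)/(F(s)⁴|F''(s)|) > 0. -/

import Mathlib

open Filter

set_option maxHeartbeats 1600000

/-- Properties of the comparison function
`F(s) = ∫_b^s (∫_a^t e^{2τ} dτ)^{-1/2} dt + 1` for `0 < a < b`: `F` is strictly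
increasing on `[b,∞)`, bounded above, strictly concave (`F'' < 0` on `(b,∞)`), and
moreover `limsup_{s→∞} F'(s)²/(F(s)|F''(s)|) < ∞` and
`liminf_{s→∞} F'(s)³(e^{2s}-1)/(F(s)⁴|F''(s)|) > 0`. -/
theorem comparison_function_properties (a b : ℝ) (ha : 0 < a) (hab : a < b) :
    let F : ℝ → ℝ := fun s =>
      (∫ t in b..s, (∫ τ in a..t, Real.exp (2 * τ)) ^ (-(1 : ℝ) / 2)) + 1
    StrictMonoOn F (Set.Ici b) ∧
    BddAbove (F '' Set.Ici b) ∧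
    (∀ s ∈ Set.Ioi b, deriv (deriv F) s < 0) ∧
    (∃ C : ℝ, ∀ᶠ s in atTop,
      (deriv F s) ^ 2 / (F s * |deriv (deriv F) s|) ≤ C) ∧
    (∃ c : ℝ, 0 < c ∧ ∀ᶠ s in atTop,
      c ≤ (deriv F s) ^ 3 * (Real.exp (2 * s) - 1) / (F s ^ 4 * |deriv (deriv F) s|)) := by
  intro F
  set G : ℝ → ℝ := fun s => (Real.exp (2 * s) - Real.exp (2 * a)) / 2 with hGdef
  -- the inner integral computed explicitly
  have hGint : ∀ s : ℝ, (∫ τ in a..s, Real.exp (2 * τ)) = G s := by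
    intro s
    have hder : ∀ τ ∈ Set.uIcc a s,
        HasDerivAt (fun t => Real.exp (2 * t) / 2) (Real.exp (2 * τ)) τ := by
      intro τ _
      have h1 : HasDerivAt (fun t : ℝ => 2 * t) 2 τ := by
        simpa using (hasDerivAt_id τ).const_mul 2
      have := h1.exp.div_const 2
      simpa [mul_comm, mul_div_assoc] using this
    have hint : IntervalIntegrable (fun τ => Real.exp (2 * τ)) MeasureTheory.volume a s :=
      (Real.continuous_exp.comp (continuous_const.mul continuous_id)).intervalIntegrable a s
    rw [intervalIntegral.integral_eq_sub_of_hasDerivAt hder hint]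
    simp [hGdef]; ring
  have hGpos : ∀ s, a < s → 0 < G s := by
    intro s hs
    have := Real.exp_lt_exp.2 (by linarith : 2 * a < 2 * s)
    simp only [hGdef]; linarith
  have hGcont : Continuous G :=
    ((Real.continuous_exp.comp (continuous_const.mul continuous_id)).sub continuous_const).div_const 2
  set h : ℝ → ℝ := fun t => G t ^ (-(1 : ℝ) / 2) with hhdef
  have hhcont : ContinuousOn h (Set.Ioi a) :=
    hGcont.continuousOn.rpow_const fun t ht => Or.inl (hGpos t ht).ne'
  have hhint : ∀ r s : ℝ, a < r → a < s → IntervalIntegrable h MeasureTheory.volume r s := by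
    intro r s hr hs
    exact (hhcont.mono (Set.ordConnected_Ioi.uIcc_subset hr hs)).intervalIntegrable
  have hhpos : ∀ t, a < t → 0 < h t := fun t ht => Real.rpow_pos_of_pos (hGpos t ht) _
  have hFeq : F = fun u => (∫ t in b..u, h t) + 1 := by
    funext u
    simp only [F, hhdef]
    congr 1
    exact intervalIntegral.integral_congr fun t _ => by rw [hGint]
  rw [hFeq]
  clear_value F
  clear hFeq F
  set F : ℝ → ℝ := fun u => (∫ t in b..u, h t) + 1 with hFdef
  -- F ≥ 1 on [b, ∞)
  have hF1 : ∀ s, b ≤ s → 1 ≤ F s := by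
    intro s hs
    have : 0 ≤ ∫ t in b..s, h t :=
      intervalIntegral.integral_nonneg hs fun t ht =>
        (hhpos t (lt_of_lt_of_le hab ht.1)).le
    simp only [hFdef]; linarith
  -- upper bound for F
  set c₀ : ℝ := (1 - Real.exp (2 * a - 2 * b)) / 2 with hc₀def
  have hc₀ : 0 < c₀ := by
    have : Real.exp (2 * a - 2 * b) < 1 := Real.exp_lt_one_iff.2 (by linarith)
    simp only [hc₀def]; linarith
  have hGlow : ∀ t, b ≤ t → c₀ * Real.exp (2 * t) ≤ G t := by
    intro t ht
    have h1 : Real.exp (2 * a) ≤ Real.exp (2 * a - 2 * b) * Real.exp (2 * t) := by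
      rw [← Real.exp_add]
      exact Real.exp_le_exp.2 (by linarith)
    simp only [hGdef, hc₀def]
    nlinarith [Real.exp_pos (2 * t)]
  have hhub : ∀ t, b ≤ t → h t ≤ c₀ ^ (-(1 : ℝ) / 2) * Real.exp (-t) := by
    intro t ht
    have hce : 0 < c₀ * Real.exp (2 * t) := mul_pos hc₀ (Real.exp_pos _)
    have h1 : h t ≤ (c₀ * Real.exp (2 * t)) ^ (-(1 : ℝ) / 2) :=
      Real.rpow_le_rpow_of_nonpos hce (hGlow t ht) (by norm_num)
    have h2 : (c₀ * Real.exp (2 * t)) ^ (-(1 : ℝ) / 2)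
        = c₀ ^ (-(1 : ℝ) / 2) * Real.exp (-t) := by
      rw [Real.mul_rpow hc₀.le (Real.exp_pos _).le, ← Real.exp_mul]
      congr 1
      ring
    linarith [h1, h2.le, h2.ge]
  set K : ℝ := c₀ ^ (-(1 : ℝ) / 2) with hKdef
  have hK : 0 < K := Real.rpow_pos_of_pos hc₀ _
  set M : ℝ := K * Real.exp (-b) + 1 with hMdef
  have hM1 : 1 ≤ M := by nlinarith [Real.exp_pos (-b)]
  have hFub : ∀ s, b ≤ s → F s ≤ M := by
    intro s hs
    have hub : (∫ t in b..s, h t) ≤ ∫ t in b..s, K * Real.exp (-t) := by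
      apply intervalIntegral.integral_mono_on hs (hhint b s hab (lt_of_lt_of_le hab hs))
      · exact (Continuous.intervalIntegrable (by continuity) b s)
      · intro t ht; exact hhub t ht.1
    have hcomp : (∫ t in b..s, K * Real.exp (-t))
        = (-(K * Real.exp (-s))) - (-(K * Real.exp (-b))) := by
      apply intervalIntegral.integral_eq_sub_of_hasDerivAt
      · intro t _
        have h1 : HasDerivAt (fun u : ℝ => -u) (-1) t := by
          exact hasDerivAt_neg t
        have := ((h1.exp).const_mul K).neg
        simpa [mul_comm, Pi.neg_def] using this
      · exact Continuous.intervalIntegrable (by continuity) b s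
    have : (∫ t in b..s, h t) ≤ K * Real.exp (-b) := by
      rw [hcomp] at hub
      nlinarith [mul_pos hK (Real.exp_pos (-s))]
    simp only [hFdef, hMdef]; linarith
  -- derivative of F
  have hF'at : ∀ s, a < s → HasDerivAt F (h s) s := by
    intro s hs
    have := intervalIntegral.integral_hasDerivAt_right (hhint b s hab hs)
      (hhcont.stronglyMeasurableAtFilter isOpen_Ioi s hs)
      (hhcont.continuousAt (Ioi_mem_nhds hs))
    simpa [hFdef] using this.add_const 1
  have hderivF : ∀ s, a < s → deriv F s = h s := fun s hs => (hF'at s hs).deriv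
  -- second derivative
  set h' : ℝ → ℝ := fun s =>
    Real.exp (2 * s) * (-(1 : ℝ) / 2) * G s ^ (-(1 : ℝ) / 2 - 1) with hh'def
  have hG'at : ∀ s : ℝ, HasDerivAt G (Real.exp (2 * s)) s := by
    intro s
    have h1 : HasDerivAt (fun t : ℝ => 2 * t) 2 s := by
      simpa using (hasDerivAt_id s).const_mul 2
    have := (h1.exp.sub_const (Real.exp (2 * a))).div_const 2
    simpa [hGdef, mul_comm, mul_div_assoc] using this
  have hh'at : ∀ s, a < s → HasDerivAt h (h' s) s := by
    intro s hs
    exact (hG'at s).rpow_const (Or.inl (hGpos s hs).ne')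
  have hderiv2 : ∀ s, a < s → deriv (deriv F) s = h' s := by
    intro s hs
    have hev : deriv F =ᶠ[nhds s] h :=
      Filter.eventually_of_mem (isOpen_Ioi.mem_nhds hs) fun y hy => hderivF y hy
    rw [hev.deriv_eq]
    exact (hh'at s hs).deriv
  have hh'neg : ∀ s, a < s → h' s < 0 := by
    intro s hs
    have h1 := Real.rpow_pos_of_pos (hGpos s hs) (-(1 : ℝ) / 2 - 1)
    have h2 := Real.exp_pos (2 * s)
    simp only [hh'def]
    nlinarith
  clear_value G h F c₀ K M h'
  refine ⟨?_, ?_, ?_, ?_, ?_⟩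
  · -- strict monotonicity
    intro r hr s hs hrs
    have har : a < r := lt_of_lt_of_le hab hr
    have has : a < s := lt_of_lt_of_le hab hs
    have hsplit : (∫ t in b..r, h t) + (∫ t in r..s, h t) = ∫ t in b..s, h t :=
      intervalIntegral.integral_add_adjacent_intervals (hhint b r hab har)
        (hhint r s har has)
    have hpos : 0 < ∫ t in r..s, h t :=
      intervalIntegral.intervalIntegral_pos_of_pos_on (hhint r s har has)
        (fun t ht => hhpos t (har.trans ht.1)) hrs
    simp only [hFdef]
    linarith
  · -- bounded above
    exact ⟨M, by rintro _ ⟨s, hs, rfl⟩; exact hFub s hs⟩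
  · -- concavity
    intro s hs
    have has : a < s := hab.trans hs
    rw [hderiv2 s has]
    exact hh'neg s has
  · -- limsup bound
    refine ⟨2, ?_⟩
    filter_upwards [eventually_ge_atTop (max b 1)] with s hs
    have hbs : b ≤ s := le_trans (le_max_left _ _) hs
    have hs1 : (1 : ℝ) ≤ s := le_trans (le_max_right _ _) hs
    have has : a < s := lt_of_lt_of_le hab hbs
    have hP : 0 < G s := hGpos s has
    have hE : (0 : ℝ) < Real.exp (2 * s) := Real.exp_pos _
    set P := G s
    set E := Real.exp (2 * s)
    rw [hderivF s has, hderiv2 s has]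
    have habs : |h' s| = E * (1 / 2) * P ^ (-(1 : ℝ) / 2 - 1) := by
      rw [abs_of_neg (hh'neg s has)]
      simp only [hh'def]; ring
    rw [habs]
    have hsq : (h s) ^ 2 = P ^ (-(1 : ℝ)) := by
      simp only [hhdef]
      rw [← Real.rpow_natCast (P ^ (-(1 : ℝ) / 2)) 2, ← Real.rpow_mul hP.le]
      norm_num
    rw [hsq]
    have hFpos : (0 : ℝ) < F s := lt_of_lt_of_le one_pos (hF1 s hbs)
    have hP32 : (0 : ℝ) < P ^ (-(1 : ℝ) / 2 - 1) := Real.rpow_pos_of_pos hP _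
    rw [div_le_iff₀ (mul_pos hFpos (mul_pos (mul_pos hE (by norm_num : (0:ℝ) < 1/2)) hP32))]
    -- key : P^(1/2) ≤ E
    have hE1 : (1 : ℝ) ≤ E := Real.one_le_exp (by linarith)
    have hPE2 : P ≤ E ^ 2 := by
      have hGs : G s = (Real.exp (2 * s) - Real.exp (2 * a)) / 2 := by
        rw [hGdef]
      show G s ≤ Real.exp (2 * s) ^ 2
      rw [hGs]
      nlinarith [Real.exp_pos (2 * a), Real.one_le_exp (by linarith : (0:ℝ) ≤ 2 * s)]
    have hkey : P ^ ((1 : ℝ) / 2) ≤ E := by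
      have := Real.rpow_le_rpow hP.le hPE2 (by norm_num : (0:ℝ) ≤ (1:ℝ)/2)
      rwa [← Real.rpow_natCast E 2, ← Real.rpow_mul (by positivity), (by norm_num :
        ((2 : ℕ) : ℝ) * ((1:ℝ)/2) = 1), Real.rpow_one] at this
    have hsplit : P ^ (-(1 : ℝ)) = P ^ ((1 : ℝ) / 2) * P ^ (-(1 : ℝ) / 2 - 1) := by
      rw [← Real.rpow_add hP]; norm_num
    rw [hsplit]
    have h1 : P ^ ((1 : ℝ) / 2) * P ^ (-(1 : ℝ) / 2 - 1) ≤ E * P ^ (-(1 : ℝ) / 2 - 1) :=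
      mul_le_mul_of_nonneg_right hkey hP32.le
    nlinarith [mul_le_mul_of_nonneg_right (hF1 s hbs) (mul_pos hE hP32).le]
  · -- liminf bound
    have hMpos : (0 : ℝ) < M := lt_of_lt_of_le one_pos hM1
    refine ⟨1 / M ^ 4, by positivity, ?_⟩
    filter_upwards [eventually_ge_atTop (max b 1)] with s hs
    have hbs : b ≤ s := le_trans (le_max_left _ _) hs
    have hs1 : (1 : ℝ) ≤ s := le_trans (le_max_right _ _) hs
    have has : a < s := lt_of_lt_of_le hab hbs
    have hP : 0 < G s := hGpos s has
    have hE : (0 : ℝ) < Real.exp (2 * s) := Real.exp_pos _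
    set P := G s
    set E := Real.exp (2 * s)
    rw [hderivF s has, hderiv2 s has]
    have habs : |h' s| = E * (1 / 2) * P ^ (-(1 : ℝ) / 2 - 1) := by
      rw [abs_of_neg (hh'neg s has)]
      simp only [hh'def]; ring
    rw [habs]
    have hcube : (h s) ^ 3 = P ^ (-(1 : ℝ) / 2 - 1) := by
      simp only [hhdef]
      rw [← Real.rpow_natCast (P ^ (-(1 : ℝ) / 2)) 3, ← Real.rpow_mul hP.le]
      norm_num
    rw [hcube]
    have hFpos : (0 : ℝ) < F s := lt_of_lt_of_le one_pos (hF1 s hbs)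
    have hP32 : (0 : ℝ) < P ^ (-(1 : ℝ) / 2 - 1) := Real.rpow_pos_of_pos hP _
    have hsimp : P ^ (-(1 : ℝ) / 2 - 1) * (E - 1) / (F s ^ 4 * (E * (1 / 2) * P ^ (-(1 : ℝ) / 2 - 1)))
        = 2 * (E - 1) / (F s ^ 4 * E) := by
      rw [div_eq_div_iff (mul_pos (pow_pos hFpos 4) (mul_pos (mul_pos hE (by norm_num : (0:ℝ) < 1/2)) hP32)).ne' (mul_pos (pow_pos hFpos 4) hE).ne']
      ring
    rw [hsimp]
    have hE2 : (2 : ℝ) ≤ E := by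
      have := Real.add_one_le_exp (2 * s)
      linarith
    rw [div_le_div_iff₀ (by positivity) (mul_pos (pow_pos hFpos 4) hE)]
    have hFM : F s ^ 4 ≤ M ^ 4 := pow_le_pow_left₀ hFpos.le (hFub s hbs) 4
    nlinarith [mul_le_mul_of_nonneg_right hFM hE.le, mul_pos (pow_pos hFpos 4) hE]
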